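/- For a prime power q, integers l ≥ 0 and i ≥ 0, if l ≡ -1 (mod q), then C(l, q(i+1)-1) ≡ C((l+1)/q - 1, i) modulo the characteristic p of F_q. -/

import Mathlib

lemma aux_sub (p : ℕ) (hp : 1 ≤ p) : ∀ K, 1 ≤ K → p * K - 1 = p * (K - 1) + (p - 1) := by
  intro K hK
  obtain ⟨k, rfl⟩ : ∃ k, K = k + 1 := ⟨K - 1, by omega⟩
  rw [Nat.mul_succ]
  simp only [Nat.add_sub_cancel]
  generalize p * k = M
  omega

lemma aux_choose (p : ℕ) (hp : p.Prime) :
    ∀ s a b : ℕ, (((p ^ s * (a + 1) - 1).choose (p ^ s * (b + 1) - 1) : ℕ) : ZMod p)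
      = ((a.choose b : ℕ) : ZMod p) := by
  haveI : Fact p.Prime := ⟨hp⟩
  intro s
  induction s with
  | zero => intro a b; simp
  | succ s ih =>
    intro a b
    have hp1 : 1 ≤ p := hp.one_lt.le
    have hKa : 1 ≤ p ^ s * (a + 1) := Nat.mul_pos (Nat.pow_pos (n := s) hp.pos) (Nat.succ_pos a)
    have hKb : 1 ≤ p ^ s * (b + 1) := Nat.mul_pos (Nat.pow_pos (n := s) hp.pos) (Nat.succ_pos b)
    have hn : p ^ (s + 1) * (a + 1) - 1 = p * (p ^ s * (a + 1) - 1) + (p - 1) := by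
      rw [show p ^ (s + 1) * (a + 1) = p * (p ^ s * (a + 1)) by ring]
      exact aux_sub p hp1 _ hKa
    have hk : p ^ (s + 1) * (b + 1) - 1 = p * (p ^ s * (b + 1) - 1) + (p - 1) := by
      rw [show p ^ (s + 1) * (b + 1) = p * (p ^ s * (b + 1)) by ring]
      exact aux_sub p hp1 _ hKb
    have lucas := (ZMod.natCast_eq_natCast_iff _ _ _).mpr
      (Choose.choose_modEq_choose_mod_mul_choose_div_nat
        (p := p) (n := p ^ (s + 1) * (a + 1) - 1) (k := p ^ (s + 1) * (b + 1) - 1))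
    have hplt : p - 1 < p := by omega
    rw [hn, hk, Nat.mul_add_mod, Nat.mul_add_mod, Nat.mod_eq_of_lt hplt,
      Nat.mul_add_div hp.pos, Nat.mul_add_div hp.pos, Nat.div_eq_of_lt hplt,
      Nat.choose_self, one_mul] at lucas
    simp only [Nat.add_zero] at lucas
    rw [← hn, ← hk] at lucas
    rw [lucas, ih a b]

theorem stmt_1 (p s q : ℕ) (hp : p.Prime) (hs : 1 ≤ s) (hq : q = p ^ s)
    (l i : ℕ) (hl : q ∣ (l + 1)) :
    ((l.choose (q * (i + 1) - 1) : ℕ) : ZMod p)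
      = ((((l + 1) / q - 1).choose i : ℕ) : ZMod p) := by
  obtain ⟨m, hm⟩ := hl
  have hq1 : 1 ≤ q := by
    rw [hq]; exact Nat.pow_pos (n := s) hp.pos
  have hm1 : 1 ≤ m := by
    rcases Nat.eq_zero_or_pos m with h | h
    · subst h; simp at hm
    · exact h
  obtain ⟨c, rfl⟩ : ∃ c, m = c + 1 := ⟨m - 1, by omega⟩
  have hl' : l = q * (c + 1) - 1 := by omega
  have hdiv : (l + 1) / q = c + 1 := by
    rw [hm, Nat.mul_div_cancel_left _ hq1]
  rw [hdiv, Nat.add_sub_cancel, hl', hq]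
  exact aux_choose p hp s c i
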